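/- Let e_0, …, e_{2N} be pairwise distinct points of modulus 1 with e_{2j+1} = -e_{2j}, e_{2j}² = e_j for 0 ≤ j ≤ N, and suppose |l_{k-1,k}(z)| ≤ 1 for all |z| ≤ 1 and 2 ≤ k ≤ 2N+1 (the Leja maximality property). Then the quadratic Lebesgue constants satisfy Λ²_{2N+1,2} ≤ (1/2)Λ²_{N+1,2} + 2Λ²_{N,2} + 1/2, where Λ_{k,2} = sup_{|z|≤1} (Σ_{j=0}^{k-1} |l_{j,k}(z)|²)^{1/2}. -/

import Mathlib

/-- The fundamental Lagrange interpolation polynomial `l_{j,k}` at nodes `e 0, …, e (k-1)`. -/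
noncomputable def lagr (e : ℕ → ℂ) (j k : ℕ) (z : ℂ) : ℂ :=
  ∏ i ∈ (Finset.range k).erase j, (z - e i) / (e j - e i)

/-- The quadratic Lebesgue constant `Λ_{k,2}` for the nodes `e 0, …, e (k-1)`. -/
noncomputable def quadLeb (e : ℕ → ℂ) (k : ℕ) : ℝ :=
  ⨆ z : Metric.closedBall (0 : ℂ) 1,
    Real.sqrt (∑ j ∈ Finset.range k, ‖lagr e j k (z : ℂ)‖ ^ 2)


lemma prod_double {M : Type*} [CommMonoid M] (g : ℕ → M) (N : ℕ) :
    ∏ i ∈ Finset.range (2 * N), g i = ∏ m ∈ Finset.range N, (g (2 * m) * g (2 * m + 1)) := by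
  induction N with
  | zero => simp
  | succ n ih =>
    rw [show 2 * (n + 1) = (2 * n + 1) + 1 by ring, Finset.prod_range_succ,
      Finset.prod_range_succ, ih, Finset.prod_range_succ, mul_assoc]

lemma sum_double {M : Type*} [AddCommMonoid M] (g : ℕ → M) (N : ℕ) :
    ∑ i ∈ Finset.range (2 * N), g i = ∑ m ∈ Finset.range N, (g (2 * m) + g (2 * m + 1)) := by
  induction N with
  | zero => simp
  | succ n ih =>
    rw [show 2 * (n + 1) = (2 * n + 1) + 1 by ring, Finset.sum_range_succ,
      Finset.sum_range_succ, ih, Finset.sum_range_succ, add_assoc]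

lemma prod_double_erase (g : ℕ → ℂ) (N j : ℕ) (hj : j < N) :
    ∏ i ∈ (Finset.range (2 * N)).erase (2 * j), g i
      = g (2 * j + 1) * ∏ m ∈ (Finset.range N).erase j, (g (2 * m) * g (2 * m + 1)) := by
  have h1 : ∏ i ∈ (Finset.range (2 * N)).erase (2 * j), g i
      = ∏ i ∈ (Finset.range (2 * N)).erase (2 * j), (if i = 2 * j then 1 else g i) := by
    refine Finset.prod_congr rfl fun i hi => ?_
    rw [if_neg (Finset.ne_of_mem_erase hi)]
  rw [h1, Finset.prod_erase (Finset.range (2 * N))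
      (f := fun i => if i = 2 * j then (1:ℂ) else g i) (by simp), prod_double]
  rw [← Finset.mul_prod_erase (Finset.range N)
      (fun m => (if 2 * m = 2 * j then (1:ℂ) else g (2 * m)) *
        (if 2 * m + 1 = 2 * j then (1:ℂ) else g (2 * m + 1)))
      (Finset.mem_range.mpr hj)]
  simp only [if_pos rfl, if_true, if_neg (show ¬(2 * j + 1 = 2 * j) by omega), one_mul]
  refine congrArg (fun t => g (2 * j + 1) * t) (Finset.prod_congr rfl fun m hm => ?_)
  have hmj : m ≠ j := Finset.ne_of_mem_erase hm
  rw [if_neg (by omega), if_neg (by omega)]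

lemma prod_double_erase_odd (g : ℕ → ℂ) (N j : ℕ) (hj : j < N) :
    ∏ i ∈ (Finset.range (2 * N)).erase (2 * j + 1), g i
      = g (2 * j) * ∏ m ∈ (Finset.range N).erase j, (g (2 * m) * g (2 * m + 1)) := by
  have h1 : ∏ i ∈ (Finset.range (2 * N)).erase (2 * j + 1), g i
      = ∏ i ∈ (Finset.range (2 * N)).erase (2 * j + 1), (if i = 2 * j + 1 then 1 else g i) := by
    refine Finset.prod_congr rfl fun i hi => ?_
    rw [if_neg (Finset.ne_of_mem_erase hi)]
  rw [h1, Finset.prod_erase (Finset.range (2 * N))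
      (f := fun i => if i = 2 * j + 1 then (1:ℂ) else g i) (by simp), prod_double]
  rw [← Finset.mul_prod_erase (Finset.range N)
      (fun m => (if 2 * m = 2 * j + 1 then (1:ℂ) else g (2 * m)) *
        (if 2 * m + 1 = 2 * j + 1 then (1:ℂ) else g (2 * m + 1)))
      (Finset.mem_range.mpr hj)]
  simp only [if_pos rfl, if_true, if_neg (show ¬(2 * j = 2 * j + 1) by omega), mul_one]
  refine congrArg (fun t => g (2 * j) * t) (Finset.prod_congr rfl fun m hm => ?_)
  have hmj : m ≠ j := Finset.ne_of_mem_erase hm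
  rw [if_neg (by omega), if_neg (by omega)]

lemma lagr_even (e : ℕ → ℂ) (N j : ℕ) (hj : j < N)
    (hneg : ∀ m ≤ N, e (2 * m + 1) = -e (2 * m))
    (hsq : ∀ m ≤ N, (e (2 * m)) ^ 2 = e m) (z : ℂ) :
    lagr e (2 * j) (2 * N + 1) z
      = ((z - e (2 * N)) / (e (2 * j) - e (2 * N)))
          * ((z + e (2 * j)) / (e (2 * j) + e (2 * j))) * lagr e j N (z ^ 2) := by
  have hjN : j ≤ N := hj.le
  simp only [lagr]
  rw [Finset.range_add_one, Finset.erase_insert_of_ne (show (2 * N : ℕ) ≠ 2 * j by omega),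
    Finset.prod_insert (by simp),
    prod_double_erase (fun i => (z - e i) / (e (2 * j) - e i)) N j hj]
  have hpair : ∀ m ∈ (Finset.range N).erase j,
      (fun i => (z - e i) / (e (2 * j) - e i)) (2 * m)
        * (fun i => (z - e i) / (e (2 * j) - e i)) (2 * m + 1)
      = (z ^ 2 - e m) / (e j - e m) := by
    intro m hm
    have hmN : m ≤ N := (Finset.mem_range.mp (Finset.mem_of_mem_erase hm)).le
    have hnum : (z - e (2 * m)) * (z - -e (2 * m)) = z ^ 2 - e m := by
      rw [← hsq m hmN]; ring
    have hden : (e (2 * j) - e (2 * m)) * (e (2 * j) - -e (2 * m)) = e j - e m := by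
      rw [← hsq m hmN, ← hsq j hjN]; ring
    simp only [div_mul_div_comm, hneg m hmN, hnum, hden]
  rw [Finset.prod_congr rfl hpair, hneg j hjN]
  simp only [sub_neg_eq_add]
  ring

lemma lagr_odd (e : ℕ → ℂ) (N j : ℕ) (hj : j < N)
    (hneg : ∀ m ≤ N, e (2 * m + 1) = -e (2 * m))
    (hsq : ∀ m ≤ N, (e (2 * m)) ^ 2 = e m) (z : ℂ) :
    lagr e (2 * j + 1) (2 * N + 1) z
      = ((z - e (2 * N)) / (-e (2 * j) - e (2 * N)))
          * ((z - e (2 * j)) / (-e (2 * j) - e (2 * j))) * lagr e j N (z ^ 2) := by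
  have hjN : j ≤ N := hj.le
  simp only [lagr]
  rw [Finset.range_add_one, Finset.erase_insert_of_ne (show (2 * N : ℕ) ≠ 2 * j + 1 by omega),
    Finset.prod_insert (by simp),
    prod_double_erase_odd (fun i => (z - e i) / (e (2 * j + 1) - e i)) N j hj]
  have hpair : ∀ m ∈ (Finset.range N).erase j,
      (fun i => (z - e i) / (e (2 * j + 1) - e i)) (2 * m)
        * (fun i => (z - e i) / (e (2 * j + 1) - e i)) (2 * m + 1)
      = (z ^ 2 - e m) / (e j - e m) := by
    intro m hm
    have hmN : m ≤ N := (Finset.mem_range.mp (Finset.mem_of_mem_erase hm)).le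
    have hnum : (z - e (2 * m)) * (z - -e (2 * m)) = z ^ 2 - e m := by
      rw [← hsq m hmN]; ring
    have hden : (-e (2 * j) - e (2 * m)) * (-e (2 * j) - -e (2 * m)) = e j - e m := by
      rw [← hsq m hmN, ← hsq j hjN]; ring
    simp only [div_mul_div_comm, hneg m hmN, hneg j hjN, hnum, hden]
  rw [Finset.prod_congr rfl hpair, hneg j hjN]
  ring

lemma lagr_last (e : ℕ → ℂ) (N : ℕ)
    (hneg : ∀ m ≤ N, e (2 * m + 1) = -e (2 * m))
    (hsq : ∀ m ≤ N, (e (2 * m)) ^ 2 = e m) (z : ℂ) :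
    lagr e (2 * N) (2 * N + 1) z = lagr e N (N + 1) (z ^ 2) := by
  simp only [lagr]
  rw [Finset.range_add_one, Finset.erase_insert Finset.notMem_range_self,
    Finset.range_add_one (n := N), Finset.erase_insert Finset.notMem_range_self,
    prod_double]
  refine Finset.prod_congr rfl fun m hm => ?_
  have hmN : m ≤ N := (Finset.mem_range.mp hm).le
  have hnum : (z - e (2 * m)) * (z - -e (2 * m)) = z ^ 2 - e m := by
    rw [← hsq m hmN]; ring
  have hden : (e (2 * N) - e (2 * m)) * (e (2 * N) - -e (2 * m)) = e N - e m := by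
    rw [← hsq m hmN, ← hsq N le_rfl]; ring
  simp only [div_mul_div_comm, hneg m hmN, hnum, hden]

lemma lagr_succ (e : ℕ → ℂ) (N j : ℕ) (hj : j < N) (w : ℂ) :
    lagr e j (N + 1) w = ((w - e N) / (e j - e N)) * lagr e j N w := by
  simp only [lagr]
  rw [Finset.range_add_one, Finset.erase_insert_of_ne (show (N : ℕ) ≠ j by omega),
    Finset.prod_insert (by simp)]

lemma lagr_T (e : ℕ → ℂ) (N j : ℕ) (hj : j < N)
    (hne : ∀ i ≤ N, ∀ k ≤ N, i ≠ k → e i ≠ e k) (w : ℂ) :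
    ((w - e j) / (e j - e N)) * lagr e j N w
      = -(lagr e N (N + 1) w * lagr e j N (e N)) := by
  have hjN : j ≤ N := hj.le
  simp only [lagr]
  rw [Finset.range_add_one (n := N), Finset.erase_insert Finset.notMem_range_self]
  rw [Finset.prod_div_distrib, Finset.prod_div_distrib, Finset.prod_div_distrib]
  have hP0 : ∏ m ∈ Finset.range N, (w - e m)
      = (w - e j) * ∏ m ∈ (Finset.range N).erase j, (w - e m) :=
    (Finset.mul_prod_erase _ _ (Finset.mem_range.mpr hj)).symm
  have hQ0 : ∏ m ∈ Finset.range N, (e N - e m)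
      = (e N - e j) * ∏ m ∈ (Finset.range N).erase j, (e N - e m) :=
    (Finset.mul_prod_erase _ _ (Finset.mem_range.mpr hj)).symm
  have hQ1 : ∏ m ∈ (Finset.range N).erase j, (e j - e m) ≠ 0 := by
    rw [Finset.prod_ne_zero_iff]
    intro m hm
    have hmN : m ≤ N := (Finset.mem_range.mp (Finset.mem_of_mem_erase hm)).le
    exact sub_ne_zero.mpr (hne j hjN m hmN (Ne.symm (Finset.ne_of_mem_erase hm)))
  have hP2 : ∏ m ∈ (Finset.range N).erase j, (e N - e m) ≠ 0 := by
    rw [Finset.prod_ne_zero_iff]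
    intro m hm
    have hmN : m ≤ N := (Finset.mem_range.mp (Finset.mem_of_mem_erase hm)).le
    have hmN' : m ≠ N := by have := Finset.mem_range.mp (Finset.mem_of_mem_erase hm); omega
    exact sub_ne_zero.mpr (hne N le_rfl m hmN (Ne.symm hmN'))
  have hNj : e N - e j ≠ 0 := sub_ne_zero.mpr (hne N le_rfl j hjN (by omega))
  have hjN' : e j - e N ≠ 0 := sub_ne_zero.mpr (hne j hjN N le_rfl (by omega))
  rw [hP0, hQ0]
  field_simp
  ring

theorem stmt14 (N : ℕ) (hN : 1 ≤ N) (e : ℕ → ℂ)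
    (hdist : ∀ i ≤ 2 * N, ∀ j ≤ 2 * N, i ≠ j → e i ≠ e j)
    (hmod : ∀ i ≤ 2 * N, ‖e i‖ = 1)
    (hneg : ∀ j ≤ N, e (2 * j + 1) = -e (2 * j))
    (hsq : ∀ j ≤ N, (e (2 * j)) ^ 2 = e j)
    (hleja : ∀ z : ℂ, ‖z‖ ≤ 1 → ∀ k, 2 ≤ k → k ≤ 2 * N + 1 →
      ‖lagr e (k - 1) k z‖ ≤ 1) :
    quadLeb e (2 * N + 1) ^ 2 ≤
      (1 / 2) * quadLeb e (N + 1) ^ 2 + 2 * quadLeb e N ^ 2 + 1 / 2 := by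
  have hz0 : ∀ i ≤ 2 * N, e i ≠ 0 := by
    intro i hi h
    have h1 := hmod i hi
    rw [h] at h1
    simp at h1
  have hneN : ∀ i ≤ N, ∀ k ≤ N, i ≠ k → e i ≠ e k := fun i hi k hk h =>
    hdist i (by omega) k (by omega) h
  have habs_sq : ∀ u : ℂ, ‖u‖ ≤ 1 → ‖u ^ 2‖ ≤ 1 := by
    intro u hu
    rw [norm_pow]
    calc ‖u‖ ^ 2 ≤ 1 ^ 2 := pow_le_pow_left₀ (norm_nonneg u) hu 2
      _ = 1 := one_pow 2
  have hpar : ∀ u v : ℂ, ‖u‖ ^ 2 + ‖v‖ ^ 2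
      = (‖u + v‖ ^ 2 + ‖u - v‖ ^ 2) / 2 := by
    intro u v
    simp only [Complex.sq_norm, Complex.normSq_apply, Complex.add_re, Complex.add_im,
      Complex.sub_re, Complex.sub_im]
    ring
  -- pointwise estimate
  have key : ∀ z : ℂ, ‖z‖ ≤ 1 →
      ∑ i ∈ Finset.range (2 * N + 1), ‖lagr e i (2 * N + 1) z‖ ^ 2
      ≤ (1 / 2) * ∑ m ∈ Finset.range (N + 1), ‖lagr e m (N + 1) (z ^ 2)‖ ^ 2
        + (∑ m ∈ Finset.range N, ‖lagr e m N (e N)‖ ^ 2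
          + ∑ m ∈ Finset.range N, ‖lagr e m N (z ^ 2)‖ ^ 2) + 1 / 2 := by
    intro z hz
    have hw : ‖z ^ 2‖ ≤ 1 := habs_sq z hz
    have hM : ‖lagr e N (N + 1) (z ^ 2)‖ ≤ 1 := by
      have h := hleja (z ^ 2) hw (N + 1) (by omega) (by omega)
      simpa using h
    have pair : ∀ j, j < N →
        ‖lagr e (2 * j) (2 * N + 1) z‖ ^ 2
          + ‖lagr e (2 * j + 1) (2 * N + 1) z‖ ^ 2
        ≤ (1 / 2) * ‖lagr e j (N + 1) (z ^ 2)‖ ^ 2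
          + (‖lagr e j N (e N)‖ ^ 2 + ‖lagr e j N (z ^ 2)‖ ^ 2) := by
      intro j hj
      have hjN : j ≤ N := hj.le
      have ha : e (2 * j) ≠ 0 := hz0 _ (by omega)
      have hejN : e j - e N ≠ 0 := sub_ne_zero.mpr (hdist j (by omega) N (by omega) (by omega))
      have hsqj : (e (2 * j)) ^ 2 = e j := hsq j hjN
      have hsqN : (e (2 * N)) ^ 2 = e N := hsq N le_rfl
      have hab2 : (e (2 * j)) ^ 2 - (e (2 * N)) ^ 2 ≠ 0 := by
        rw [hsqj, hsqN]; exact hejN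
      have hamb : e (2 * j) - e (2 * N) ≠ 0 := by
        intro h; apply hab2
        have : (e (2*j))^2 - (e (2*N))^2 = (e (2*j) - e (2*N)) * (e (2*j) + e (2*N)) := by ring
        rw [this, h, zero_mul]
      have hapb : e (2 * j) + e (2 * N) ≠ 0 := by
        intro h; apply hab2
        have : (e (2*j))^2 - (e (2*N))^2 = (e (2*j) - e (2*N)) * (e (2*j) + e (2*N)) := by ring
        rw [this, h, mul_zero]
      have h2a : e (2 * j) + e (2 * j) ≠ 0 := by
        intro h; apply ha; linear_combination h / 2
      have hnab : -e (2 * j) - e (2 * N) ≠ 0 := by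
        intro h; apply hapb; linear_combination -h
      have hnaa : -e (2 * j) - e (2 * j) ≠ 0 := by
        intro h; apply ha; linear_combination -h / 2
      have h2j := lagr_even e N j hj hneg hsq z
      have h2j1 := lagr_odd e N j hj hneg hsq z
      -- scalar identities
      have hCsum : (z - e (2 * N)) / (e (2 * j) - e (2 * N)) * ((z + e (2 * j)) / (e (2 * j) + e (2 * j)))
          + (z - e (2 * N)) / (-e (2 * j) - e (2 * N)) * ((z - e (2 * j)) / (-e (2 * j) - e (2 * j)))
          = (z ^ 2 - e N) / (e j - e N) := by
        rw [← hsqj, ← hsqN]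
        field_simp
        ring
      have hCdiff : (z - e (2 * N)) / (e (2 * j) - e (2 * N)) * ((z + e (2 * j)) / (e (2 * j) + e (2 * j)))
          - (z - e (2 * N)) / (-e (2 * j) - e (2 * N)) * ((z - e (2 * j)) / (-e (2 * j) - e (2 * j)))
          = (e (2 * N) / e (2 * j)) * ((z ^ 2 - e j) / (e j - e N)) + z / e (2 * j) := by
        rw [← hsqj, ← hsqN]
        field_simp
        ring
      have hS : lagr e (2 * j) (2 * N + 1) z + lagr e (2 * j + 1) (2 * N + 1) z
          = lagr e j (N + 1) (z ^ 2) := by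
        rw [h2j, h2j1, ← add_mul, hCsum, lagr_succ e N j hj (z ^ 2)]
      have hD : lagr e (2 * j) (2 * N + 1) z - lagr e (2 * j + 1) (2 * N + 1) z
          = (e (2 * N) / e (2 * j))
              * (-(lagr e N (N + 1) (z ^ 2) * lagr e j N (e N)))
            + (z / e (2 * j)) * lagr e j N (z ^ 2) := by
        have step : lagr e (2 * j) (2 * N + 1) z - lagr e (2 * j + 1) (2 * N + 1) z
            = (e (2 * N) / e (2 * j))
                * (((z ^ 2 - e j) / (e j - e N)) * lagr e j N (z ^ 2))
              + (z / e (2 * j)) * lagr e j N (z ^ 2) := by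
          rw [h2j, h2j1, ← sub_mul, hCdiff]
          ring
        rw [step, lagr_T e N j hj hneN (z ^ 2)]
      -- abs bounds
      have hd1 : ‖(e (2 * N) / e (2 * j))
            * (-(lagr e N (N + 1) (z ^ 2) * lagr e j N (e N)))‖
          = ‖lagr e N (N + 1) (z ^ 2)‖ * ‖lagr e j N (e N)‖ := by
        rw [norm_mul, norm_neg, norm_mul, norm_div, hmod (2 * N) le_rfl,
          hmod (2 * j) (by omega)]
        norm_num
      have hd2 : ‖(z / e (2 * j)) * lagr e j N (z ^ 2)‖
          ≤ ‖lagr e j N (z ^ 2)‖ := by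
        rw [norm_mul, norm_div, hmod (2 * j) (by omega), div_one]
        exact mul_le_of_le_one_left (norm_nonneg _) hz
      have hdabs : ‖lagr e (2 * j) (2 * N + 1) z - lagr e (2 * j + 1) (2 * N + 1) z‖
          ≤ ‖lagr e j N (e N)‖ + ‖lagr e j N (z ^ 2)‖ := by
        rw [hD]
        refine le_trans (norm_add_le _ _) ?_
        rw [hd1]
        have h3 : ‖lagr e N (N + 1) (z ^ 2)‖ * ‖lagr e j N (e N)‖
            ≤ ‖lagr e j N (e N)‖ :=
          mul_le_of_le_one_left (norm_nonneg _) hM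
        exact add_le_add h3 hd2
      have hd4 : ‖lagr e (2 * j) (2 * N + 1) z - lagr e (2 * j + 1) (2 * N + 1) z‖ ^ 2
          ≤ (‖lagr e j N (e N)‖ + ‖lagr e j N (z ^ 2)‖) ^ 2 :=
        pow_le_pow_left₀ (norm_nonneg _) hdabs 2
      rw [hpar (lagr e (2 * j) (2 * N + 1) z) (lagr e (2 * j + 1) (2 * N + 1) z), hS]
      nlinarith [sq_nonneg (‖lagr e j N (e N)‖ - ‖lagr e j N (z ^ 2)‖),
        sq_nonneg (‖lagr e j (N + 1) (z ^ 2)‖)]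
    -- assemble sums
    conv_lhs => rw [Finset.sum_range_succ,
      sum_double (fun i => ‖lagr e i (2 * N + 1) z‖ ^ 2) N]
    rw [lagr_last e N hneg hsq z]
    have hsum : ∑ m ∈ Finset.range N, (‖lagr e (2 * m) (2 * N + 1) z‖ ^ 2
          + ‖lagr e (2 * m + 1) (2 * N + 1) z‖ ^ 2)
        ≤ ∑ m ∈ Finset.range N, ((1 / 2) * ‖lagr e m (N + 1) (z ^ 2)‖ ^ 2
          + (‖lagr e m N (e N)‖ ^ 2 + ‖lagr e m N (z ^ 2)‖ ^ 2)) :=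
      Finset.sum_le_sum fun m hm => pair m (Finset.mem_range.mp hm)
    have hexp : ∑ m ∈ Finset.range N, ((1 / 2) * ‖lagr e m (N + 1) (z ^ 2)‖ ^ 2
          + (‖lagr e m N (e N)‖ ^ 2 + ‖lagr e m N (z ^ 2)‖ ^ 2))
        = (1 / 2) * ∑ m ∈ Finset.range N, ‖lagr e m (N + 1) (z ^ 2)‖ ^ 2
          + (∑ m ∈ Finset.range N, ‖lagr e m N (e N)‖ ^ 2
            + ∑ m ∈ Finset.range N, ‖lagr e m N (z ^ 2)‖ ^ 2) := by
      rw [Finset.sum_add_distrib, Finset.sum_add_distrib, ← Finset.mul_sum]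
    have hlastsum : ∑ m ∈ Finset.range (N + 1), ‖lagr e m (N + 1) (z ^ 2)‖ ^ 2
        = ∑ m ∈ Finset.range N, ‖lagr e m (N + 1) (z ^ 2)‖ ^ 2
          + ‖lagr e N (N + 1) (z ^ 2)‖ ^ 2 := Finset.sum_range_succ _ N
    have hM2 : ‖lagr e N (N + 1) (z ^ 2)‖ ^ 2 ≤ 1 := by
      calc ‖lagr e N (N + 1) (z ^ 2)‖ ^ 2 ≤ 1 ^ 2 :=
        pow_le_pow_left₀ (norm_nonneg _) hM 2
        _ = 1 := one_pow 2
    rw [hexp] at hsum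
    rw [hlastsum]
    linarith
  -- quadLeb machinery
  have hcont : ∀ k, Continuous fun z : ℂ =>
      Real.sqrt (∑ j ∈ Finset.range k, ‖lagr e j k z‖ ^ 2) := by
    intro k
    apply Real.continuous_sqrt.comp
    apply continuous_finset_sum
    intro j _
    have h : Continuous fun z : ℂ => lagr e j k z := by
      simp only [lagr]
      exact continuous_finset_prod _ fun i _ =>
        ((continuous_id.sub continuous_const).div_const _)
    exact (continuous_norm.comp h).pow 2
  have hbdd : ∀ k, BddAbove (Set.range fun z : Metric.closedBall (0 : ℂ) 1 =>
      Real.sqrt (∑ j ∈ Finset.range k, ‖lagr e j k (z : ℂ)‖ ^ 2)) := by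
    intro k
    have h := ((isCompact_closedBall (0 : ℂ) 1).image (hcont k)).bddAbove
    rwa [Set.image_eq_range] at h
  have hQnn : ∀ k, 0 ≤ quadLeb e k := fun k => Real.iSup_nonneg fun z => Real.sqrt_nonneg _
  have hleb : ∀ k, ∀ w : ℂ, ‖w‖ ≤ 1 →
      ∑ j ∈ Finset.range k, ‖lagr e j k w‖ ^ 2 ≤ quadLeb e k ^ 2 := by
    intro k w hw
    have hmem : w ∈ Metric.closedBall (0 : ℂ) 1 := by
      rw [Metric.mem_closedBall, dist_zero_right]; exact hw
    have h1 : Real.sqrt (∑ j ∈ Finset.range k, ‖lagr e j k w‖ ^ 2)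
        ≤ quadLeb e k := by
      exact le_ciSup (f := fun z : Metric.closedBall (0 : ℂ) 1 =>
        Real.sqrt (∑ j ∈ Finset.range k, ‖lagr e j k (z : ℂ)‖ ^ 2)) (hbdd k) ⟨w, hmem⟩
    have h0 : 0 ≤ ∑ j ∈ Finset.range k, ‖lagr e j k w‖ ^ 2 :=
      Finset.sum_nonneg fun j _ => sq_nonneg _
    calc ∑ j ∈ Finset.range k, ‖lagr e j k w‖ ^ 2
        = Real.sqrt (∑ j ∈ Finset.range k, ‖lagr e j k w‖ ^ 2) ^ 2 :=
          (Real.sq_sqrt h0).symm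
      _ ≤ quadLeb e k ^ 2 := pow_le_pow_left₀ (Real.sqrt_nonneg _) h1 2
  have hR0 : 0 ≤ (1 / 2) * quadLeb e (N + 1) ^ 2 + 2 * quadLeb e N ^ 2 + 1 / 2 := by
    have := hQnn (N + 1); have := hQnn N; positivity
  have hfin : quadLeb e (2 * N + 1)
      ≤ Real.sqrt ((1 / 2) * quadLeb e (N + 1) ^ 2 + 2 * quadLeb e N ^ 2 + 1 / 2) := by
    have hne : Nonempty (Metric.closedBall (0 : ℂ) 1) := ⟨⟨0, by simp⟩⟩
    apply ciSup_le
    intro z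
    apply Real.sqrt_le_sqrt
    have hz1 : ‖(z : ℂ)‖ ≤ 1 := by
      have h := z.2
      rwa [Metric.mem_closedBall, dist_zero_right] at h
    have hk := key (z : ℂ) hz1
    have hA := hleb (N + 1) ((z : ℂ) ^ 2) (habs_sq _ hz1)
    have hB := hleb N (e N) (le_of_eq (hmod N (by omega)))
    have hC := hleb N ((z : ℂ) ^ 2) (habs_sq _ hz1)
    linarith
  calc quadLeb e (2 * N + 1) ^ 2
      ≤ Real.sqrt ((1 / 2) * quadLeb e (N + 1) ^ 2 + 2 * quadLeb e N ^ 2 + 1 / 2) ^ 2 :=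
        pow_le_pow_left₀ (hQnn _) hfin 2
    _ = (1 / 2) * quadLeb e (N + 1) ^ 2 + 2 * quadLeb e N ^ 2 + 1 / 2 := Real.sq_sqrt hR0
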